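/- arXiv:1905.06400 — 2 statements merged into one kernel-verified Lean document; each statement's English description precedes it below -/
import Mathlib

section
/- Let 𝓜 = [M_{ijk}] ∈ ℝ^{N×T×K} be a third-order tensor of CP rank r, so that M_{ijk} = Σ_{z=1}^r U_{iz} V_{jz} W_{kz} for some U ∈ ℝ^{N×r}, V ∈ ℝ^{T×r}, W ∈ ℝ^{K×r}. Let the index i₀ of the target unit be chosen uniformly at random from {1,…,N}. Then with probability at least 1 − r/N there exists a vector β* ∈ ℝ^{N−1}, indexed by the remaining units z ∈ {1,…,N} \ {i₀}, such that M_{i₀ j k} = Σ_{z ≠ i₀} β*_z · M_{z j k} simultaneously for all j ∈ [T] and all k ∈ [K]. -/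
/-- Proposition 4.1: for a CP rank-`r` tensor, a uniformly random target unit
`i₀` is, with probability at least `1 - r/N`, a fixed linear combination of the
remaining (donor) units simultaneously across all times `j` and metrics `k`. -/

theorem stmt_1 (N T K r : ℕ) (hN : 0 < N)
    (M : Fin N → Fin T → Fin K → ℝ)
    (U : Fin N → Fin r → ℝ) (V : Fin T → Fin r → ℝ) (W : Fin K → Fin r → ℝ)
    (hM : ∀ i j k, M i j k = ∑ z, U i z * V j z * W k z) :
    (1 : ℝ) - (r : ℝ) / N ≤
      (Set.ncard {i₀ : Fin N | ∃ β : Fin N → ℝ,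
        ∀ j k, M i₀ j k = ∑ z ∈ Finset.univ.erase i₀, β z * M z j k} : ℝ) / N := by
  classical
  set S : Set (Fin N) := {i₀ : Fin N | ∃ β : Fin N → ℝ,
      ∀ j k, M i₀ j k = ∑ z ∈ Finset.univ.erase i₀, β z * M z j k} with hS
  set bad : Finset (Fin N) :=
    Finset.univ.filter (fun i => U i ∉ Submodule.span ℝ (U '' {z | z ≠ i})) with hbad
  -- step 1: complement of bad is contained in S
  have hgood : ∀ i₀ : Fin N, i₀ ∉ bad → i₀ ∈ S := by
    intro i₀ hi
    simp only [hbad, Finset.mem_filter, Finset.mem_univ, true_and, not_not] at hi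
    have hrange : U '' {z | z ≠ i₀}
        = Set.range (fun z : {z : Fin N // z ≠ i₀} => U z) := by
      exact Set.image_eq_range U {z | z ≠ i₀}
    rw [hrange, Submodule.mem_span_range_iff_exists_fun] at hi
    obtain ⟨c, hc⟩ := hi
    refine ⟨fun z => if h : z ≠ i₀ then c ⟨z, h⟩ else 0, ?_⟩
    intro j k
    have hU : ∀ s, U i₀ s
        = ∑ z ∈ Finset.univ.erase i₀, (if h : z ≠ i₀ then c ⟨z, h⟩ else 0) * U z s := by
      intro s
      have h1 := congrFun hc s
      simp only [Finset.sum_apply, Pi.smul_apply, smul_eq_mul] at h1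
      rw [← h1]
      rw [Finset.sum_subtype (Finset.univ.erase i₀) (p := fun z => z ≠ i₀)
        (fun z => by simp [Finset.mem_erase])
        (f := fun z => (if h : z ≠ i₀ then c ⟨z, h⟩ else 0) * U z s)]
      apply Finset.sum_congr rfl
      intro z _
      simp [z.2]
    calc M i₀ j k = ∑ s, U i₀ s * V j s * W k s := hM i₀ j k
      _ = ∑ s, (∑ z ∈ Finset.univ.erase i₀, (if h : z ≠ i₀ then c ⟨z, h⟩ else 0) * U z s) * V j s * W k s := by
          apply Finset.sum_congr rfl; intro s _; rw [hU s]
      _ = ∑ z ∈ Finset.univ.erase i₀, (if h : z ≠ i₀ then c ⟨z, h⟩ else 0) * M z j k := by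
          simp only [Finset.sum_mul]
          rw [Finset.sum_comm]
          apply Finset.sum_congr rfl
          intro z _
          rw [hM z j k, Finset.mul_sum]
          apply Finset.sum_congr rfl
          intro s _
          ring
  -- step 2: bad has card ≤ r
  have hcard : bad.card ≤ r := by
    have hli : LinearIndependent ℝ (fun i : bad => U i) := by
      rw [linearIndependent_iff_notMem_span]
      intro i hmem
      have hi := i.2
      simp only [hbad, Finset.mem_filter, Finset.mem_univ, true_and] at hi
      apply hi
      refine Submodule.span_mono ?_ hmem
      rintro x ⟨y, hy, rfl⟩
      exact ⟨y, by
        rcases hy with ⟨hy1, hy2⟩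
        intro h
        exact hy2 (by ext; exact h ▸ rfl), rfl⟩
    have := hli.fintype_card_le_finrank
    simpa [Fintype.card_coe] using this
  -- step 3: arithmetic
  have hsub : (Finset.univ.filter (fun i => i ∉ bad)) ⊆ S.toFinset := by
    intro i hi
    simp only [Finset.mem_filter, Finset.mem_univ, true_and] at hi
    simpa using hgood i hi
  have hcompl : N - bad.card ≤ S.toFinset.card := by
    have h2 : Finset.filter (fun i => i ∉ bad) Finset.univ = badᶜ := by
      ext x; simp
    have := Finset.card_le_card hsub
    rwa [h2, Finset.card_compl, Fintype.card_fin] at this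
  have hNc : bad.card ≤ N := by
    simpa using Finset.card_le_card (Finset.subset_univ bad)
  have hreal : (N : ℝ) - r ≤ S.ncard := by
    rw [Set.ncard_eq_toFinset_card']
    calc (N : ℝ) - r ≤ (N : ℝ) - bad.card := by
          have : (bad.card : ℝ) ≤ r := Nat.cast_le.2 hcard
          linarith
      _ = ((N - bad.card : ℕ) : ℝ) := by
          rw [Nat.cast_sub hNc]
      _ ≤ S.toFinset.card := Nat.cast_le.2 hcompl
  have hNpos : (0 : ℝ) < N := by exact_mod_cast hN
  rw [sub_div' (ne_of_gt hNpos)] at *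
  rw [div_le_div_iff₀ hNpos hNpos]
  nlinarith [hreal]
end

section
/- Let 𝓣 = [T_{ijk}] ∈ ℝ^{N×T×K} be a third-order tensor. Suppose (i) every frontal slice 𝓣_{·,·,k} ∈ ℝ^{N×T} (k ∈ [K]) has matrix rank at most m, and (ii) 𝓣 has at most s distinct frontal slices, i.e., the set {𝓣_{·,·,k} : k ∈ [K]} of matrices has cardinality at most s. Then the CP rank of 𝓣 is at most m · s, i.e., there exist U ∈ ℝ^{N×(ms)}, V ∈ ℝ^{T×(ms)}, W ∈ ℝ^{K×(ms)} with T_{ijk} = Σ_{z=1}^{ms} U_{iz} V_{jz} W_{kz} for all (i,j,k). -/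
/-- A real matrix of rank at most `m` factors as a sum of `m` rank-one terms. -/
lemma matrix_fact {N T : ℕ} (m : ℕ) (A : Matrix (Fin N) (Fin T) ℝ) (h : A.rank ≤ m) :
    ∃ (u : Fin N → Fin m → ℝ) (v : Fin T → Fin m → ℝ),
      ∀ i j, A i j = ∑ z, u i z * v j z := by
  classical
  have hd : Module.finrank ℝ (LinearMap.range A.mulVecLin) ≤ m := h
  let b := Module.finBasis ℝ (LinearMap.range A.mulVecLin)
  let L : (Fin m → ℝ) →ₗ[ℝ] (LinearMap.range A.mulVecLin) :=
    b.equivFun.symm.toLinearMap ∘ₗ LinearMap.funLeft ℝ ℝ (Fin.castLE hd)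
  have hL : Function.Surjective L := by
    apply Function.Surjective.comp b.equivFun.symm.surjective
    exact LinearMap.funLeft_surjective_of_injective ℝ ℝ _ (Fin.castLE_injective hd)
  have memcol : ∀ j, (fun i => A i j) ∈ LinearMap.range A.mulVecLin := by
    intro j
    exact ⟨Pi.single j 1, by ext i; simp [Matrix.mulVecLin_apply, Matrix.mulVec_single]⟩
  choose x hx using fun j => hL ⟨fun i => A i j, memcol j⟩
  refine ⟨fun i z => ((L (Pi.single z 1) : LinearMap.range A.mulVecLin) : Fin N → ℝ) i,
    fun j z => x j z, fun i j => ?_⟩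
  have key : (⟨fun i => A i j, memcol j⟩ : LinearMap.range A.mulVecLin)
      = ∑ z, x j z • L (Pi.single z 1) := by
    rw [← hx j]
    conv_lhs => rw [pi_eq_sum_univ (x j)]
    rw [map_sum]
    refine Finset.sum_congr rfl fun z _ => ?_
    rw [map_smul]
    congr 1
    exact congrArg L (by ext j'; simp [Pi.single_apply, eq_comm])
  have h2 := congrArg (fun w : LinearMap.range A.mulVecLin => (w : Fin N → ℝ) i) key
  simpa [Submodule.coe_sum, mul_comm] using h2

/-- If every frontal slice of a third-order tensor has matrix rank at most `m`
and the tensor has at most `s` distinct frontal slices, then its CP rank is at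
most `m * s`. -/
theorem stmt_6 (N T K m s : ℕ) (𝓣 : Fin N → Fin T → Fin K → ℝ)
    (h1 : ∀ k : Fin K, (Matrix.of fun i j => 𝓣 i j k : Matrix (Fin N) (Fin T) ℝ).rank ≤ m)
    (h2 : (Set.range fun k : Fin K =>
      (Matrix.of fun i j => 𝓣 i j k : Matrix (Fin N) (Fin T) ℝ)).ncard ≤ s) :
    ∃ (U : Fin N → Fin (m * s) → ℝ) (V : Fin T → Fin (m * s) → ℝ)
      (W : Fin K → Fin (m * s) → ℝ),
      ∀ i j k, 𝓣 i j k = ∑ z, U i z * V j z * W k z := by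
  classical
  set sl : Fin K → Matrix (Fin N) (Fin T) ℝ :=
    fun k => Matrix.of fun i j => 𝓣 i j k with hsl
  have hfin : (Set.range sl).Finite := Set.finite_range sl
  set F : Finset (Matrix (Fin N) (Fin T) ℝ) := hfin.toFinset with hF
  have hFcard : F.card ≤ s := by
    rw [hF, ← Set.ncard_eq_toFinset_card (Set.range sl) hfin]
    exact h2
  have hmem : ∀ k, sl k ∈ F := by
    intro k; rw [hF, Set.Finite.mem_toFinset]; exact Set.mem_range_self k
  set M : Fin s → Matrix (Fin N) (Fin T) ℝ :=
    fun t => if h : (t : ℕ) < F.card then (F.equivFin.symm ⟨t, h⟩ : F) else 0 with hM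
  set g : Fin K → Fin s := fun k => Fin.castLE hFcard (F.equivFin ⟨sl k, hmem k⟩) with hg
  have hMg : ∀ k, M (g k) = sl k := by
    intro k
    have hlt : ((g k : Fin s) : ℕ) < F.card := (F.equivFin ⟨sl k, hmem k⟩).isLt
    simp only [hM, dif_pos hlt]
    have : (⟨((g k : Fin s) : ℕ), hlt⟩ : Fin F.card) = F.equivFin ⟨sl k, hmem k⟩ := by
      ext; simp [hg]
    rw [this, Equiv.symm_apply_apply]
  have hMrank : ∀ t, (M t).rank ≤ m := by
    intro t
    by_cases h : (t : ℕ) < F.card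
    · simp only [hM, dif_pos h]
      have hmem' : ((F.equivFin.symm ⟨t, h⟩ : F) : Matrix (Fin N) (Fin T) ℝ) ∈ F :=
        (F.equivFin.symm ⟨t, h⟩).2
      have hmem2 : ((F.equivFin.symm ⟨t, h⟩ : F) : Matrix (Fin N) (Fin T) ℝ) ∈ Set.range sl := by
        rw [← Set.Finite.mem_toFinset hfin]
        exact hmem'
      obtain ⟨k, hk⟩ := hmem2
      have h1' : (sl k).rank ≤ m := h1 k
      exact (congrArg Matrix.rank hk).symm.trans_le h1'
    · simp only [hM, dif_neg h]
      simp [Matrix.rank_zero]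
  choose u v huv using fun t => matrix_fact m (M t) (hMrank t)
  refine ⟨fun i z => u (finProdFinEquiv.symm z).2 i (finProdFinEquiv.symm z).1,
    fun j z => v (finProdFinEquiv.symm z).2 j (finProdFinEquiv.symm z).1,
    fun k z => if (finProdFinEquiv.symm z).2 = g k then 1 else 0,
    fun i j k => ?_⟩
  have hsum : ∑ z : Fin (m * s),
      (u (finProdFinEquiv.symm z).2 i (finProdFinEquiv.symm z).1 *
        v (finProdFinEquiv.symm z).2 j (finProdFinEquiv.symm z).1 *
        if (finProdFinEquiv.symm z).2 = g k then 1 else 0)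
      = ∑ p : Fin m × Fin s, (u p.2 i p.1 * v p.2 j p.1 * if p.2 = g k then 1 else 0) := by
    rw [← Equiv.sum_comp finProdFinEquiv]
    simp
  rw [hsum, Fintype.sum_prod_type]
  have : ∀ p1 : Fin m, ∑ p2 : Fin s,
      (u p2 i p1 * v p2 j p1 * if p2 = g k then 1 else 0) = u (g k) i p1 * v (g k) j p1 := by
    intro p1
    rw [Finset.sum_eq_single (g k)]
    · simp
    · intro b _ hb; simp [hb]
    · intro hb; simp at hb
  simp only [this]
  have := huv (g k) i j
  rw [hMg k] at this
  exact this
end
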